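/- arXiv:2605.24316 — 3 statements merged into one kernel-verified Lean document; each statement's English description precedes it below -/
import Mathlib

section
/- Let Σ_ν be symmetric PSD, γ_t ∈ (0, γ_0] with all eigenvalues of I − γ_t Σ_ν in [0,1], and let η_t be random vectors with E[η_t] = 0, E[η_t η_t^⊤] ⪯ σ_η² Σ_ν, with η_t independent of the past. If ν_t = (I − γ_t Σ_ν) ν_{t−1} + γ_t η_t with ν_0 = 0, then E[ν_t ν_t^⊤] ⪯ σ_η² γ_0 I for every t ≥ 0. -/
open MeasureTheory Matrix ProbabilityTheory

private lemma psd_smul_nonneg' {n : Type*} [Fintype n] {P : Matrix n n ℝ} (hP : P.PosSemidef)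
    {c : ℝ} (hc : 0 ≤ c) : (c • P).PosSemidef := by
  refine ⟨?_, fun x => ?_⟩
  · show (c • P)ᴴ = c • P
    rw [Matrix.conjTranspose_smul, star_trivial, hP.1]
  · exact (hP.smul hc).2 x

private lemma int_mul_L2' {Ω : Type*} [MeasurableSpace Ω] {μ : Measure Ω}
    {f g : Ω → ℝ} (hf : MemLp f 2 μ) (hg : MemLp g 2 μ) :
    Integrable (fun ω => f ω * g ω) μ := by
  have h := MemLp.smul (p := 2) (q := 2) (r := 1) hg hf
  rw [memLp_one_iff_integrable] at h
  exact h

private lemma memL2_of_sq' {Ω : Type*} [MeasurableSpace Ω] {μ : Measure Ω} {f : Ω → ℝ}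
    (hm : Measurable f) (h : Integrable (fun ω => f ω * f ω) μ) : MemLp f 2 μ := by
  rw [memLp_two_iff_integrable_sq hm.aestronglyMeasurable]
  convert h using 2 with ω
  simp [pow_two]

private lemma meas_mulVec' {n : ℕ} {Ω : Type*} [MeasurableSpace Ω]
    (A : Matrix (Fin n) (Fin n) ℝ) {f : Ω → Fin n → ℝ} (hf : Measurable f) :
    Measurable (fun ω => A *ᵥ f ω) := by
  apply measurable_pi_lambda
  intro i
  show Measurable fun ω => ∑ k, A i k * f ω k
  exact Finset.measurable_sum _ fun k _ =>
    (measurable_const.mul ((measurable_pi_apply k).comp hf))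

/-- Covariance bound for a semi-stochastic linear recursion: if
`ν_t = (I − γ_t Σ_ν) ν_{t−1} + γ_t η_t` with `ν_0 = 0`, where the noises `η_t` are
centered, independent of the past, with `E[η_t η_t^⊤] ⪯ σ_η² Σ_ν`, the eigenvalues of
`I − γ_t Σ_ν` lie in `[0,1]`, and `0 < γ_t ≤ γ_0`, then `E[ν_t ν_t^⊤] ⪯ σ_η² γ_0 I`. -/
theorem stmt8 {Ω : Type*} [MeasurableSpace Ω] (μ : Measure Ω) [IsProbabilityMeasure μ]
    (M : ℕ) (Sig : Matrix (Fin M) (Fin M) ℝ) (hSig : Sig.PosSemidef)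
    (γ0 : ℝ) (hγ0 : 0 < γ0) (γ : ℕ → ℝ) (hγpos : ∀ t, 0 < γ t) (hγle : ∀ t, γ t ≤ γ0)
    (hlow : ∀ t, ((1 : Matrix (Fin M) (Fin M) ℝ) - γ t • Sig).PosSemidef)
    (hup : ∀ t, (γ t • Sig).PosSemidef)
    (ση : ℝ) (η : ℕ → Ω → Fin M → ℝ)
    (hηmeas : ∀ t, Measurable (η t))
    (hηmean : ∀ t i, ∫ ω, η t ω i ∂μ = 0)
    (hηint : ∀ t i j, Integrable (fun ω => η t ω i * η t ω j) μ)
    (hηcov : ∀ t, ((ση ^ 2) • Sig -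
        Matrix.of (fun i j => ∫ ω, η t ω i * η t ω j ∂μ)).PosSemidef)
    (hηindep : ∀ t, IndepFun (η (t + 1)) (fun ω => fun s : Fin (t + 1) => η s.val ω) μ)
    (ν : ℕ → Ω → Fin M → ℝ)
    (hν0 : ∀ ω, ν 0 ω = 0)
    (hνrec : ∀ t ω, ν (t + 1) ω =
      ((1 : Matrix (Fin M) (Fin M) ℝ) - γ (t + 1) • Sig) *ᵥ ν t ω
        + γ (t + 1) • η (t + 1) ω)
    (hνint : ∀ t i j, Integrable (fun ω => ν t ω i * ν t ω j) μ) :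
    ∀ t, ((ση ^ 2 * γ0) • (1 : Matrix (Fin M) (Fin M) ℝ) -
        Matrix.of (fun i j => ∫ ω, ν t ω i * ν t ω j ∂μ)).PosSemidef := by
  classical
  -- spectral machinery
  have hH : Sig.IsHermitian := hSig.1
  set U : Matrix (Fin M) (Fin M) ℝ := (hH.eigenvectorUnitary : Matrix (Fin M) (Fin M) ℝ) with hU
  set lam : Fin M → ℝ := hH.eigenvalues with hlamdef
  have hUU : star U * U = 1 := Matrix.mem_unitaryGroup_iff'.mp hH.eigenvectorUnitary.2
  have hUU' : U * star U = 1 := Matrix.mem_unitaryGroup_iff.mp hH.eigenvectorUnitary.2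
  set cj : (Fin M → ℝ) → Matrix (Fin M) (Fin M) ℝ :=
    fun d => U * Matrix.diagonal d * star U with hcj
  have cj_mul : ∀ d e, cj d * cj e = cj (d * e) := by
    intro d e
    have h1 : star U * (U * diagonal e * star U) = diagonal e * star U := by
      rw [← Matrix.mul_assoc, ← Matrix.mul_assoc, hUU, Matrix.one_mul]
    simp only [hcj]
    rw [Matrix.mul_assoc (U * diagonal d), h1, ← Matrix.mul_assoc, Matrix.mul_assoc U,
      Matrix.diagonal_mul_diagonal]
    rfl
  have cj_one : cj 1 = 1 := by
    simp only [hcj, Pi.one_def, Matrix.diagonal_one, Matrix.mul_one, hUU']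
  have cj_spec : Sig = cj lam := by
    simpa [hcj] using hH.spectral_theorem
  have cj_psd : ∀ d, (∀ i, 0 ≤ d i) → (cj d).PosSemidef := by
    intro d hd
    have := (Matrix.posSemidef_diagonal_iff.mpr hd).mul_mul_conjTranspose_same U
    simpa only [hcj, Matrix.star_eq_conjTranspose] using this
  have cj_psd_rev : ∀ d, (cj d).PosSemidef → ∀ i, 0 ≤ d i := by
    intro d hd
    have : (Matrix.diagonal d).PosSemidef := by
      have h2 := hd.mul_mul_conjTranspose_same (star U)
      rw [← Matrix.star_eq_conjTranspose, star_star, hcj] at h2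
      simp only at h2
      rwa [← Matrix.mul_assoc, ← Matrix.mul_assoc, hUU, Matrix.one_mul,
        Matrix.mul_assoc, hUU, Matrix.mul_one] at h2
    exact Matrix.posSemidef_diagonal_iff.mp this
  have cj_add : ∀ d e, cj d + cj e = cj (d + e) := by
    intro d e
    show U * diagonal d * star U + U * diagonal e * star U
      = U * diagonal (fun i => d i + e i) * star U
    rw [← Matrix.diagonal_add, Matrix.mul_add, Matrix.add_mul]
  have cj_smul : ∀ (c : ℝ) d, c • cj d = cj (c • d) := by
    intro c d
    show c • (U * diagonal d * star U) = U * diagonal (c • d) * star U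
    rw [Matrix.diagonal_smul, Matrix.mul_smul, Matrix.smul_mul]
  have cj_sub : ∀ d e, cj d - cj e = cj (d - e) := by
    intro d e
    have hneg : -cj e = cj (-e) := by
      have := cj_smul (-1) e
      simpa [neg_smul, one_smul] using this
    rw [sub_eq_add_neg, hneg, cj_add, ← sub_eq_add_neg]
  -- eigenvalue bounds
  have hlam0 : ∀ i, 0 ≤ lam i := fun i => hSig.eigenvalues_nonneg i
  have hAcj : ∀ u, (1 : Matrix (Fin M) (Fin M) ℝ) - γ u • Sig
      = cj (fun i => 1 - γ u * lam i) := by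
    intro u
    calc (1 : Matrix (Fin M) (Fin M) ℝ) - γ u • Sig = cj 1 - cj (γ u • lam) := by
          rw [cj_one, cj_spec, cj_smul]
      _ = cj (1 - γ u • lam) := cj_sub _ _
      _ = cj (fun i => 1 - γ u * lam i) := rfl
  have ha0 : ∀ u i, 0 ≤ 1 - γ u * lam i := by
    intro u i
    have h2 := hlow u
    rw [hAcj u] at h2
    exact cj_psd_rev _ h2 i
  have ha1 : ∀ u i, 1 - γ u * lam i ≤ 1 := by
    intro u i
    have : 0 ≤ γ u * lam i := mul_nonneg (hγpos u).le (hlam0 i)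
    linarith
  -- the scalar product process
  set q : ℕ → Fin M → ℝ := fun t i => ∏ s ∈ Finset.range t, (1 - γ (s + 1) * lam i) with hqdef
  have hq0 : ∀ t i, 0 ≤ q t i := fun t i =>
    Finset.prod_nonneg fun s _ => ha0 (s + 1) i
  have hq1 : ∀ t i, q t i ≤ 1 := fun t i =>
    Finset.prod_le_one (fun s _ => ha0 (s + 1) i) (fun s _ => ha1 (s + 1) i)
  have hqsucc : ∀ t i, q (t + 1) i = (1 - γ (t + 1) * lam i) * q t i := by
    intro t i
    simp only [hqdef]
    rw [Finset.prod_range_succ, mul_comm]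
  -- covariance matrices
  set C : ℕ → Matrix (Fin M) (Fin M) ℝ :=
    fun t => Matrix.of fun i j => ∫ ω, ν t ω i * ν t ω j ∂μ with hCdef
  -- measurability
  have hνmeas : ∀ t, Measurable (ν t) := by
    intro t
    induction t with
    | zero =>
      have : ν 0 = fun _ => (0 : Fin M → ℝ) := funext hν0
      rw [this]; exact measurable_const
    | succ t ih =>
      have : ν (t + 1) = fun ω =>
          ((1 : Matrix (Fin M) (Fin M) ℝ) - γ (t + 1) • Sig) *ᵥ ν t ω
            + γ (t + 1) • η (t + 1) ω := funext (hνrec t)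
      rw [this]
      exact (meas_mulVec' _ ih).add
        ((measurable_const_smul (γ (t + 1))).comp (hηmeas (t + 1)))
  have hηL2 : ∀ t i, MemLp (fun ω => η t ω i) 2 μ := fun t i =>
    memL2_of_sq' ((measurable_pi_apply i).comp (hηmeas t)) (hηint t i i)
  have hνL2 : ∀ t i, MemLp (fun ω => ν t ω i) 2 μ := fun t i =>
    memL2_of_sq' ((measurable_pi_apply i).comp (hνmeas t)) (hνint t i i)
  -- representation of ν t as a measurable function of the past noises
  have hrep : ∀ t, ∃ g : (Fin (t + 1) → Fin M → ℝ) → Fin M → ℝ,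
      Measurable g ∧ ∀ ω, ν t ω = g (fun s => η s.val ω) := by
    intro t
    induction t with
    | zero => exact ⟨fun _ => 0, measurable_const, fun ω => hν0 ω⟩
    | succ t ih =>
      obtain ⟨g, hg, hge⟩ := ih
      refine ⟨fun x => ((1 : Matrix (Fin M) (Fin M) ℝ) - γ (t + 1) • Sig) *ᵥ
          g (fun s : Fin (t + 1) => x s.castSucc) + γ (t + 1) • x (Fin.last (t + 1)),
        ?_, ?_⟩
      · refine Measurable.add ?_ ?_
        · exact meas_mulVec' _ (hg.comp (measurable_pi_lambda _ fun s => measurable_pi_apply _))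
        · exact (measurable_const_smul (γ (t + 1))).comp
            (measurable_pi_apply (Fin.last (t + 1)))
      · intro ω
        rw [hνrec t ω, hge ω]
        simp [Fin.coe_castSucc, Fin.val_last]
  -- cross terms vanish
  have hcross : ∀ t k j, ∫ ω, ν t ω k * η (t + 1) ω j ∂μ = 0 := by
    intro t k j
    obtain ⟨g, hg, hge⟩ := hrep t
    have h1 := ((hηindep t).comp (measurable_pi_apply j)
      ((measurable_pi_apply k).comp hg)).symm
    have h2 : (((fun y : Fin M → ℝ => y k) ∘ g) ∘ (fun ω => fun s : Fin (t + 1) => η s.val ω))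
        = fun ω => ν t ω k := by
      funext ω
      simp only [Function.comp_apply]
      rw [← hge ω]
    have h4 : ((fun y : Fin M → ℝ => y j) ∘ η (t + 1)) = fun ω => η (t + 1) ω j := rfl
    rw [h2, h4] at h1
    have h3 := IndepFun.integral_fun_mul_eq_mul_integral h1
      (((measurable_pi_apply k).comp (hνmeas t)).aestronglyMeasurable)
      (((measurable_pi_apply j).comp (hηmeas (t + 1))).aestronglyMeasurable)
    rw [h3]
    show (∫ ω, ν t ω k ∂μ) * ∫ ω, η (t + 1) ω j ∂μ = 0
    rw [hηmean (t + 1) j, mul_zero]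
  -- the covariance recursion
  have hCrec : ∀ t, C (t + 1) =
      ((1 : Matrix (Fin M) (Fin M) ℝ) - γ (t + 1) • Sig) * C t *
        ((1 : Matrix (Fin M) (Fin M) ℝ) - γ (t + 1) • Sig)
      + (γ (t + 1)) ^ 2 • Matrix.of (fun i j => ∫ ω, η (t + 1) ω i * η (t + 1) ω j ∂μ) := by
    intro t
    set A : Matrix (Fin M) (Fin M) ℝ := (1 : Matrix (Fin M) (Fin M) ℝ) - γ (t + 1) • Sig
      with hAdef
    have hAsym : ∀ k l, A l k = A k l := by
      intro k l
      have h := (hlow (t + 1)).1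
      calc A l k = Aᴴ k l := by rw [Matrix.conjTranspose_apply, star_trivial]
        _ = A k l := by rw [h]
    have hent : ∀ i j, (∫ ω, ν (t + 1) ω i * ν (t + 1) ω j ∂μ)
        = (∑ k, ∑ l, (A i k * A j l) * (∫ ω, ν t ω k * ν t ω l ∂μ))
          + (γ (t + 1) * γ (t + 1)) * (∫ ω, η (t + 1) ω i * η (t + 1) ω j ∂μ) := by
      intro i j
      have hIc1 : ∀ k, Integrable (fun ω => ν t ω k * η (t + 1) ω j) μ := fun k =>
        int_mul_L2' (hνL2 t k) (hηL2 (t + 1) j)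
      have hIc2 : ∀ l, Integrable (fun ω => η (t + 1) ω i * ν t ω l) μ := fun l =>
        int_mul_L2' (hηL2 (t + 1) i) (hνL2 t l)
      have hsplit : (fun ω => ν (t + 1) ω i * ν (t + 1) ω j) = fun ω =>
          ((∑ k, ∑ l, (A i k * A j l) * (ν t ω k * ν t ω l))
            + (∑ k, (γ (t + 1) * A i k) * (ν t ω k * η (t + 1) ω j)))
          + ((∑ l, (γ (t + 1) * A j l) * (η (t + 1) ω i * ν t ω l))
            + (γ (t + 1) * γ (t + 1)) * (η (t + 1) ω i * η (t + 1) ω j)) := by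
        funext ω
        rw [hνrec t ω, ← hAdef]
        have hmv : ∀ (x : Fin M → ℝ) (r : Fin M), (A *ᵥ x) r = ∑ k, A r k * x k :=
          fun x r => rfl
        simp only [Pi.add_apply, Pi.smul_apply, smul_eq_mul, hmv]
        rw [add_mul, mul_add, mul_add]
        congr 1
        · congr 1
          · rw [Finset.sum_mul_sum]
            exact Finset.sum_congr rfl fun k _ => Finset.sum_congr rfl fun l _ => by ring
          · rw [Finset.sum_mul]
            exact Finset.sum_congr rfl fun k _ => by ring
        · congr 1
          · rw [Finset.mul_sum]
            exact Finset.sum_congr rfl fun l _ => by ring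
          · ring
      have hI1 : Integrable (fun ω => ∑ k, ∑ l, (A i k * A j l) * (ν t ω k * ν t ω l)) μ :=
        integrable_finset_sum _ fun k _ => integrable_finset_sum _ fun l _ =>
          (hνint t k l).const_mul _
      have hI2 : Integrable (fun ω => ∑ k, (γ (t + 1) * A i k) * (ν t ω k * η (t + 1) ω j)) μ :=
        integrable_finset_sum _ fun k _ => (hIc1 k).const_mul _
      have hI3 : Integrable (fun ω => ∑ l, (γ (t + 1) * A j l) * (η (t + 1) ω i * ν t ω l)) μ :=
        integrable_finset_sum _ fun l _ => (hIc2 l).const_mul _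
      have hI4 : Integrable
          (fun ω => (γ (t + 1) * γ (t + 1)) * (η (t + 1) ω i * η (t + 1) ω j)) μ :=
        (hηint (t + 1) i j).const_mul _
      have hI12 : Integrable (fun ω =>
          (∑ k, ∑ l, (A i k * A j l) * (ν t ω k * ν t ω l))
            + (∑ k, (γ (t + 1) * A i k) * (ν t ω k * η (t + 1) ω j))) μ := hI1.add hI2
      have hI34 : Integrable (fun ω =>
          (∑ l, (γ (t + 1) * A j l) * (η (t + 1) ω i * ν t ω l))
            + (γ (t + 1) * γ (t + 1)) * (η (t + 1) ω i * η (t + 1) ω j)) μ := hI3.add hI4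
      rw [hsplit, integral_add hI12 hI34, integral_add hI1 hI2, integral_add hI3 hI4]
      have e1 : ∫ ω, (∑ k, ∑ l, (A i k * A j l) * (ν t ω k * ν t ω l)) ∂μ
          = ∑ k, ∑ l, (A i k * A j l) * (∫ ω, ν t ω k * ν t ω l ∂μ) := by
        rw [integral_finset_sum _ fun k _ => integrable_finset_sum _ fun l _ =>
          (hνint t k l).const_mul _]
        refine Finset.sum_congr rfl fun k _ => ?_
        rw [integral_finset_sum _ fun l _ => (hνint t k l).const_mul _]
        exact Finset.sum_congr rfl fun l _ => integral_const_mul _ _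
      have e2 : ∫ ω, (∑ k, (γ (t + 1) * A i k) * (ν t ω k * η (t + 1) ω j)) ∂μ = 0 := by
        rw [integral_finset_sum _ fun k _ => (hIc1 k).const_mul _]
        refine Finset.sum_eq_zero fun k _ => ?_
        rw [integral_const_mul, hcross t k j, mul_zero]
      have e3 : ∫ ω, (∑ l, (γ (t + 1) * A j l) * (η (t + 1) ω i * ν t ω l)) ∂μ = 0 := by
        rw [integral_finset_sum _ fun l _ => (hIc2 l).const_mul _]
        refine Finset.sum_eq_zero fun l _ => ?_
        rw [integral_const_mul]
        have : (fun ω => η (t + 1) ω i * ν t ω l) = fun ω => ν t ω l * η (t + 1) ω i :=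
          funext fun ω => mul_comm _ _
        rw [this, hcross t l i, mul_zero]
      have e4 : ∫ ω, (γ (t + 1) * γ (t + 1)) * (η (t + 1) ω i * η (t + 1) ω j) ∂μ
          = (γ (t + 1) * γ (t + 1)) * ∫ ω, η (t + 1) ω i * η (t + 1) ω j ∂μ :=
        integral_const_mul _ _
      rw [e1, e2, e3, e4, add_zero, zero_add]
    ext i j
    show (∫ ω, ν (t + 1) ω i * ν (t + 1) ω j ∂μ) = _
    rw [hent i j]
    rw [Matrix.add_apply, Matrix.smul_apply, Matrix.mul_apply, smul_eq_mul]
    congr 1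
    · rw [Finset.sum_comm]
      refine Finset.sum_congr rfl fun l _ => ?_
      rw [Matrix.mul_apply, Finset.sum_mul]
      refine Finset.sum_congr rfl fun k _ => ?_
      show (A i k * A j l) * (C t k l) = A i k * C t k l * A l j
      rw [hAsym l j]; ring
    · rw [pow_two]
      rfl
  -- the main inductive bound
  have main : ∀ t, ((ση ^ 2 * γ0) • (1 : Matrix (Fin M) (Fin M) ℝ)
      - (ση ^ 2 * γ0) • cj (q t) - C t).PosSemidef := by
    intro t
    induction t with
    | zero =>
      have hC0 : C 0 = 0 := by
        ext i j
        show (∫ ω, ν 0 ω i * ν 0 ω j ∂μ) = 0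
        simp [hν0]
      have hq00 : q 0 = 1 := by
        funext i
        simp [hqdef]
      rw [hC0, hq00, cj_one, sub_zero, sub_self]
      exact Matrix.PosSemidef.zero
    | succ t ih =>
      set a : Fin M → ℝ := fun i => 1 - γ (t + 1) * lam i with hadef
      have hAcj' : (1 : Matrix (Fin M) (Fin M) ℝ) - γ (t + 1) • Sig = cj a := hAcj (t + 1)
      have hq' : q (t + 1) = a * q t := funext fun i => hqsucc t i
      set E : Matrix (Fin M) (Fin M) ℝ :=
        Matrix.of fun i j => ∫ ω, η (t + 1) ω i * η (t + 1) ω j ∂μ with hEdef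
      -- expansion of the conjugated previous bound
      have hexp : cj a * ((ση ^ 2 * γ0) • (1 : Matrix (Fin M) (Fin M) ℝ)
          - (ση ^ 2 * γ0) • cj (q t) - C t) * cj a
          = (ση ^ 2 * γ0) • cj (a * a) - (ση ^ 2 * γ0) • cj (a * q t * a)
            - cj a * C t * cj a := by
        rw [Matrix.mul_sub, Matrix.mul_sub, Matrix.sub_mul, Matrix.sub_mul,
          Matrix.mul_smul, Matrix.mul_smul, Matrix.smul_mul, Matrix.smul_mul,
          Matrix.mul_one, cj_mul, cj_mul, cj_mul]
      -- the key scalar identity, lifted through `cj`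
      have hsc : (ση ^ 2 * γ0) • (1 : Matrix (Fin M) (Fin M) ℝ)
          - (ση ^ 2 * γ0) • cj (a * q t)
          = ((ση ^ 2 * γ0) • cj (a * a) - (ση ^ 2 * γ0) • cj (a * q t * a))
            + (γ (t + 1) ^ 2) • ((ση ^ 2) • cj lam)
            + (ση ^ 2 * γ (t + 1) * (γ0 - γ (t + 1))) • cj lam
            + ((ση ^ 2 * γ0) * γ (t + 1)) • cj (a * (1 - q t) * lam) := by
        rw [← cj_one]
        simp only [cj_smul, cj_sub, cj_add]
        apply congrArg
        funext i
        simp only [Pi.add_apply, Pi.sub_apply, Pi.smul_apply, Pi.mul_apply, Pi.one_apply,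
          smul_eq_mul, hadef]
        ring
      -- the decomposition of the new bound matrix
      have hkey : (ση ^ 2 * γ0) • (1 : Matrix (Fin M) (Fin M) ℝ)
          - (ση ^ 2 * γ0) • cj (q (t + 1)) - C (t + 1)
          = cj a * ((ση ^ 2 * γ0) • (1 : Matrix (Fin M) (Fin M) ℝ)
              - (ση ^ 2 * γ0) • cj (q t) - C t) * cj a
            + (γ (t + 1) ^ 2) • ((ση ^ 2) • Sig - E)
            + (ση ^ 2 * γ (t + 1) * (γ0 - γ (t + 1))) • cj lam
            + ((ση ^ 2 * γ0) * γ (t + 1)) • cj (a * (1 - q t) * lam) := by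
        rw [hCrec t, hAcj', hq', hexp, cj_spec, smul_sub, hsc]
        abel
      rw [hkey]
      have hT1 : (cj a * ((ση ^ 2 * γ0) • (1 : Matrix (Fin M) (Fin M) ℝ)
          - (ση ^ 2 * γ0) • cj (q t) - C t) * cj a).PosSemidef := by
        have h1 := ih.mul_mul_conjTranspose_same (cj a)
        have hch : (cj a)ᴴ = cj a := by
          rw [← hAcj']
          exact (hlow (t + 1)).1
        rwa [hch] at h1
      have hT2 : ((γ (t + 1) ^ 2) • ((ση ^ 2) • Sig - E)).PosSemidef :=
        psd_smul_nonneg' (hηcov (t + 1)) (sq_nonneg _)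
      have hT3 : ((ση ^ 2 * γ (t + 1) * (γ0 - γ (t + 1))) • cj lam).PosSemidef := by
        refine psd_smul_nonneg' ?_ ?_
        · rw [← cj_spec]; exact hSig
        · exact mul_nonneg (mul_nonneg (sq_nonneg _) (hγpos _).le)
            (sub_nonneg.mpr (hγle _))
      have hT4 : (((ση ^ 2 * γ0) * γ (t + 1)) • cj (a * (1 - q t) * lam)).PosSemidef := by
        refine psd_smul_nonneg' (cj_psd _ fun i => ?_) ?_
        · exact mul_nonneg (mul_nonneg (ha0 (t + 1) i)
            (by simpa using sub_nonneg.mpr (hq1 t i))) (hlam0 i)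
        · exact mul_nonneg (mul_nonneg (sq_nonneg _) hγ0.le) (hγpos _).le
      exact ((hT1.add hT2).add hT3).add hT4
  -- conclusion
  intro t
  show ((ση ^ 2 * γ0) • (1 : Matrix (Fin M) (Fin M) ℝ) - C t).PosSemidef
  have h2 : ((ση ^ 2 * γ0) • cj (q t)).PosSemidef :=
    psd_smul_nonneg' (cj_psd _ (hq0 t)) (mul_nonneg (sq_nonneg _) hγ0.le)
  have h3 : (ση ^ 2 * γ0) • (1 : Matrix (Fin M) (Fin M) ℝ) - C t
      = ((ση ^ 2 * γ0) • (1 : Matrix (Fin M) (Fin M) ℝ)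
          - (ση ^ 2 * γ0) • cj (q t) - C t) + (ση ^ 2 * γ0) • cj (q t) := by
    abel
  rw [h3]
  exact (main t).add h2
end

section
/- Let Σ = S_{0:k}H_{0:k}S_{0:k}^⊤ + A_k where A_k is positive definite. Then with T := H^{1/2}S^⊤Σ^{−1}SH^{1/2} − I written in the 2×2 block form with head block U, off-diagonal V, and tail block W := H_{k:∞}^{1/2}S_{k:∞}^⊤Σ^{−1}S_{k:∞}H_{k:∞}^{1/2} − I, one has the exact identity W² + V^⊤V = −W, and consequently 0 ⪯ W² + V^⊤V ⪯ I. -/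
open Matrix

/-- The square root of a positive semidefinite matrix, as `Matrix.PosSemidef.sqrt` was defined
in Mathlib of December 2024 (removed since). -/
noncomputable def Matrix.PosSemidef.sqrt {n 𝕜 : Type*} [Fintype n] [DecidableEq n] [RCLike 𝕜]
    [PartialOrder 𝕜] [StarOrderedRing 𝕜]
    {A : Matrix n n 𝕜} (hA : A.PosSemidef) : Matrix n n 𝕜 :=
  hA.1.eigenvectorUnitary.1 * diagonal ((↑) ∘ Real.sqrt ∘ hA.1.eigenvalues) *
    (star hA.1.eigenvectorUnitary : Matrix n n 𝕜)

theorem Matrix.PosSemidef.posSemidef_sqrt {n : Type*} [Fintype n] [DecidableEq n]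
    {A : Matrix n n ℝ} (hA : A.PosSemidef) : hA.sqrt.PosSemidef := by
  unfold Matrix.PosSemidef.sqrt
  have hD : (diagonal ((RCLike.ofReal : ℝ → ℝ) ∘ Real.sqrt ∘ hA.1.eigenvalues) : Matrix n n ℝ).PosSemidef := by
    rw [posSemidef_diagonal_iff]
    intro i
    simp [Real.sqrt_nonneg]
  simpa [star_eq_conjTranspose] using hD.mul_mul_conjTranspose_same (hA.1.eigenvectorUnitary.1)

theorem Matrix.PosSemidef.sqrt_mul_self {n : Type*} [Fintype n] [DecidableEq n]
    {A : Matrix n n ℝ} (hA : A.PosSemidef) : hA.sqrt * hA.sqrt = A := by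
  unfold Matrix.PosSemidef.sqrt
  conv_rhs => rw [hA.1.spectral_theorem, Unitary.conjStarAlgAut_apply]
  have hU : (star hA.1.eigenvectorUnitary : Matrix n n ℝ) * hA.1.eigenvectorUnitary.1 = 1 :=
    Unitary.coe_star_mul_self _
  have hd : (diagonal ((RCLike.ofReal : ℝ → ℝ) ∘ Real.sqrt ∘ hA.1.eigenvalues) : Matrix n n ℝ) *
      diagonal ((RCLike.ofReal : ℝ → ℝ) ∘ Real.sqrt ∘ hA.1.eigenvalues) = diagonal (RCLike.ofReal ∘ hA.1.eigenvalues) := by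
    rw [diagonal_mul_diagonal]
    congr 1; funext i
    simp [Real.mul_self_sqrt (hA.eigenvalues_nonneg i)]
  calc _ = hA.1.eigenvectorUnitary.1 * (diagonal ((RCLike.ofReal : ℝ → ℝ) ∘ Real.sqrt ∘ hA.1.eigenvalues) *
      ((star hA.1.eigenvectorUnitary : Matrix n n ℝ) * hA.1.eigenvectorUnitary.1) *
      diagonal ((RCLike.ofReal : ℝ → ℝ) ∘ Real.sqrt ∘ hA.1.eigenvalues)) * (star hA.1.eigenvectorUnitary : Matrix n n ℝ) := by
        simp only [Matrix.mul_assoc]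
    _ = _ := by rw [hU, Matrix.mul_one, hd]

/-- Tail-block identity for the approximation error: with
`Σ = S₀H₀S₀^⊤ + A` where `A = S₁H₁S₁^⊤` is positive definite,
`W = H₁^{1/2}S₁^⊤Σ^{−1}S₁H₁^{1/2} − I` and `V = H₀^{1/2}S₀^⊤Σ^{−1}S₁H₁^{1/2}`
satisfy the exact identity `W² + V^⊤V = −W`, and consequently
`0 ⪯ W² + V^⊤V ⪯ I`. -/
theorem stmt14 (Mdim k₁ k₂ : ℕ)
    (H₀ : Matrix (Fin k₁) (Fin k₁) ℝ) (hH₀ : H₀.PosSemidef)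
    (H₁ : Matrix (Fin k₂) (Fin k₂) ℝ) (hH₁ : H₁.PosSemidef)
    (S₀ : Matrix (Fin Mdim) (Fin k₁) ℝ) (S₁ : Matrix (Fin Mdim) (Fin k₂) ℝ)
    (hA : (S₁ * H₁ * S₁ᵀ).PosDef) :
    let Sig := S₀ * H₀ * S₀ᵀ + S₁ * H₁ * S₁ᵀ
    let W := hH₁.sqrt * S₁ᵀ * Sig⁻¹ * S₁ * hH₁.sqrt - 1
    let V := hH₀.sqrt * S₀ᵀ * Sig⁻¹ * S₁ * hH₁.sqrt
    W * W + Vᵀ * V = -W ∧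
      (W * W + Vᵀ * V).PosSemidef ∧
      ((1 : Matrix (Fin k₂) (Fin k₂) ℝ) - (W * W + Vᵀ * V)).PosSemidef := by
  intro Sig W V
  have h0PSD : (S₀ * H₀ * S₀ᵀ).PosSemidef := by
    simpa [Matrix.conjTranspose_eq_transpose_of_trivial] using
      hH₀.mul_mul_conjTranspose_same S₀
  have hSig : Sig.PosDef := Matrix.PosDef.posSemidef_add h0PSD hA
  have hdet : IsUnit Sig.det := isUnit_iff_ne_zero.mpr hSig.det_pos.ne'
  have hSigSymm : Sigᵀ = Sig := by
    simpa [Matrix.conjTranspose_eq_transpose_of_trivial] using hSig.isHermitian.eq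
  have hinvSymm : Sig⁻¹ᵀ = Sig⁻¹ := by
    rw [Matrix.transpose_nonsing_inv, hSigSymm]
  set a := hH₁.sqrt with ha
  set b := hH₀.sqrt with hb
  have hs₁ : aᵀ = a := by
    simpa [Matrix.conjTranspose_eq_transpose_of_trivial] using hH₁.posSemidef_sqrt.isHermitian.eq
  have hs₀ : bᵀ = b := by
    simpa [Matrix.conjTranspose_eq_transpose_of_trivial] using hH₀.posSemidef_sqrt.isHermitian.eq
  have haa : ∀ x : Matrix (Fin k₂) (Fin k₂) ℝ, a * (a * x) = H₁ * x := fun x => by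
    rw [← Matrix.mul_assoc, ha, hH₁.sqrt_mul_self]
  have hbb : ∀ x : Matrix (Fin k₁) (Fin k₂) ℝ, b * (b * x) = H₀ * x := fun x => by
    rw [← Matrix.mul_assoc, hb, hH₀.sqrt_mul_self]
  have hVT : Vᵀ = a * S₁ᵀ * Sig⁻¹ * S₀ * b := by
    simp [V, Matrix.transpose_mul, hs₀, hs₁, hinvSymm, Matrix.mul_assoc, ← ha, ← hb]
  set Q := a * S₁ᵀ * Sig⁻¹ * S₁ * a with hQ
  have hc : ∀ x : Matrix (Fin Mdim) (Fin k₂) ℝ, Sig * (Sig⁻¹ * x) = x := fun x => by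
    rw [← Matrix.mul_assoc, Matrix.mul_nonsing_inv _ hdet, Matrix.one_mul]
  have e1 : Q * Q = a * (S₁ᵀ * (Sig⁻¹ * (S₁ * H₁ * S₁ᵀ * (Sig⁻¹ * (S₁ * a))))) := by
    simp [hQ, Matrix.mul_assoc, haa]
  have e2 : Vᵀ * V = a * (S₁ᵀ * (Sig⁻¹ * (S₀ * H₀ * S₀ᵀ * (Sig⁻¹ * (S₁ * a))))) := by
    rw [hVT]
    simp [V, Matrix.mul_assoc, hbb, ← hb, ← ha]
  have key : Q * Q + Vᵀ * V = Q := by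
    rw [e1, e2]
    calc a * (S₁ᵀ * (Sig⁻¹ * (S₁ * H₁ * S₁ᵀ * (Sig⁻¹ * (S₁ * a)))))
          + a * (S₁ᵀ * (Sig⁻¹ * (S₀ * H₀ * S₀ᵀ * (Sig⁻¹ * (S₁ * a)))))
        = a * (S₁ᵀ * (Sig⁻¹ * ((S₁ * H₁ * S₁ᵀ + S₀ * H₀ * S₀ᵀ) * (Sig⁻¹ * (S₁ * a))))) := by
          simp only [← Matrix.mul_add, ← Matrix.add_mul]
      _ = a * (S₁ᵀ * (Sig⁻¹ * (Sig * (Sig⁻¹ * (S₁ * a))))) := by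
          rw [show S₁ * H₁ * S₁ᵀ + S₀ * H₀ * S₀ᵀ = Sig from add_comm _ _]
      _ = Q := by rw [hc]; simp [hQ, Matrix.mul_assoc]
  have hWQ : W = Q - 1 := rfl
  have hmain : W * W + Vᵀ * V = -W := by
    rw [hWQ]
    have h1 : (Q - 1) * (Q - 1) + Vᵀ * V = (Q * Q + Vᵀ * V) - Q - Q + 1 := by noncomm_ring
    rw [h1, key]
    abel
  refine ⟨hmain, ?_, ?_⟩
  · have hWsym : Wᵀ = W := by
      simp [hWQ, hQ, Matrix.transpose_mul, hs₁, hinvSymm, Matrix.mul_assoc]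
    have h1 : (W * W).PosSemidef := by
      have := Matrix.posSemidef_conjTranspose_mul_self W
      simpa [Matrix.conjTranspose_eq_transpose_of_trivial, hWsym] using this
    have h2 : (Vᵀ * V).PosSemidef := by
      simpa [Matrix.conjTranspose_eq_transpose_of_trivial] using
        Matrix.posSemidef_conjTranspose_mul_self V
    exact h1.add h2
  · rw [hmain]
    have hQPSD : Q.PosSemidef := by
      have := hSig.inv.posSemidef.mul_mul_conjTranspose_same (a * S₁ᵀ)
      simpa [hQ, Matrix.conjTranspose_eq_transpose_of_trivial, Matrix.transpose_mul, hs₁,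
        Matrix.mul_assoc] using this
    have h3 : (1 : Matrix (Fin k₂) (Fin k₂) ℝ) - -W = Q := by
      rw [hWQ]; abel
    rw [h3]; exact hQPSD
end

section
/- Let Σ be symmetric positive definite M×M and 0 < 2γ μ_i(Σ) < 1 for all i. Define M'_T := Σ(I − 2γΣ)^{2T_eff}. Then for any PSD matrix Σ_w, tr(M'_T Σ^{−1} Σ_w Σ^{−1}) ≥ ∑_{i: μ_i(Σ) < 1/(γ T_eff)} μ_i(Σ_w) / (μ_i(Σ) (1 − 2γμ_i(Σ))^{−2T_eff}), and for indices with μ_i(Σ) < 1/(γT_eff) the factor (1 − 2γμ_i(Σ))^{−2T_eff} is bounded above by e^{8} (assuming 2γμ_i(Σ) ≤ 1/2). -/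
open Matrix Finset

private lemma conj_mul17 {m : Type*} [Fintype m] [DecidableEq m]
    (U A B : Matrix m m ℝ) (hUU : Uᵀ * U = 1) :
    (U * A * Uᵀ) * (U * B * Uᵀ) = U * (A * B) * Uᵀ := by
  have h : ∀ X : Matrix m m ℝ, Uᵀ * (U * X) = X := fun X => by
    rw [← Matrix.mul_assoc, hUU, Matrix.one_mul]
  simp only [Matrix.mul_assoc, h]

private lemma conj_pow17 {m : Type*} [Fintype m] [DecidableEq m]
    (U D : Matrix m m ℝ) (hU : U * Uᵀ = 1) (hUU : Uᵀ * U = 1) (n : ℕ) :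
    (U * D * Uᵀ) ^ n = U * D ^ n * Uᵀ := by
  induction n with
  | zero => simpa using hU.symm
  | succ k ih => rw [pow_succ, ih, conj_mul17 U _ _ hUU, pow_succ]

private lemma trace_form17 {m : Type*} [Fintype m] [DecidableEq m]
    (a b c : m → ℝ) (W : Matrix m m ℝ) :
    Matrix.trace (Matrix.diagonal a * (W * (Matrix.diagonal b * (Wᵀ * Matrix.diagonal c))))
      = ∑ i, ∑ j, a i * c i * (W i j) ^ 2 * b j := by
  rw [Matrix.trace]
  refine Finset.sum_congr rfl fun i _ => ?_
  rw [Matrix.diag_apply, Matrix.diagonal_mul, Matrix.mul_apply, Finset.mul_sum]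
  refine Finset.sum_congr rfl fun j _ => ?_
  rw [Matrix.diagonal_mul, Matrix.mul_diagonal, Matrix.transpose_apply]
  ring

/-- Lower trace bound for the bias filter via von Neumann's inequality: with sorted
eigen-decompositions `Σ = U diag(μ) U^⊤`, `Σ_w = V diag(ν) V^⊤` (μ, ν nonincreasing),
and `M'_T = Σ(I − 2γΣ)^{2T_eff}`, one has
`tr(M'_T Σ^{−1} Σ_w Σ^{−1}) ≥ ∑_{i : μ_i < 1/(γT_eff)} ν_i / (μ_i (1−2γμ_i)^{−2T_eff})`,
and `(1−2γμ_i)^{−2T_eff} ≤ e^8` whenever `μ_i < 1/(γT_eff)` and `2γμ_i ≤ 1/2`. -/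
theorem stmt17 (M Teff : ℕ) (hTeff : 1 ≤ Teff) (γ : ℝ) (hγ : 0 < γ)
    (Sig Sigw : Matrix (Fin M) (Fin M) ℝ) (hSig : Sig.PosDef) (hSigw : Sigw.PosSemidef)
    (U V : Matrix (Fin M) (Fin M) ℝ) (μ ν : Fin M → ℝ)
    (hU : U * Uᵀ = 1) (hV : V * Vᵀ = 1)
    (hSigdiag : Sig = U * Matrix.diagonal μ * Uᵀ)
    (hSigwdiag : Sigw = V * Matrix.diagonal ν * Vᵀ)
    (hμanti : Antitone μ) (hνanti : Antitone ν)
    (hμpos : ∀ i, 0 < μ i) (hνnonneg : ∀ i, 0 ≤ ν i)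
    (heig : ∀ i, 2 * γ * μ i < 1) :
    (Matrix.trace
        ((Sig * (((1 : Matrix (Fin M) (Fin M) ℝ) - (2 * γ) • Sig) ^ (2 * Teff)))
          * Sig⁻¹ * Sigw * Sig⁻¹)
      ≥ ∑ i ∈ Finset.univ.filter (fun i => μ i < 1 / (γ * Teff)),
          ν i / (μ i * ((1 - 2 * γ * μ i) ^ (2 * Teff))⁻¹)) ∧
    (∀ i, μ i < 1 / (γ * Teff) → 2 * γ * μ i ≤ 1 / 2 →
      ((1 - 2 * γ * μ i) ^ (2 * Teff))⁻¹ ≤ Real.exp 8) := by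
  have hμne : ∀ i, μ i ≠ 0 := fun i => (hμpos i).ne'
  have hTpos : (0 : ℝ) < Teff := by exact_mod_cast hTeff
  constructor
  · -- Part 1
    have hUU : Uᵀ * U = 1 := mul_eq_one_comm.mp hU
    have hVV : Vᵀ * V = 1 := mul_eq_one_comm.mp hV
    set P : Fin M → ℝ := fun i => (1 - 2 * γ * μ i) ^ (2 * Teff) with hPdef
    have hsub : ∀ i, (0:ℝ) < 1 - 2 * γ * μ i := fun i => by linarith [heig i]
    have hPpos : ∀ i, 0 < P i := fun i => pow_pos (hsub i) _
    set d : Fin M → ℝ := fun i => P i * (μ i)⁻¹ with hddef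
    have hdpos : ∀ i, 0 < d i := fun i => mul_pos (hPpos i) (inv_pos.mpr (hμpos i))
    have hdmono : Monotone d := by
      intro i j hij
      have h1 : μ j ≤ μ i := hμanti hij
      have h2 : (μ i)⁻¹ ≤ (μ j)⁻¹ := inv_anti₀ (hμpos j) h1
      have h25 : 2 * γ * μ j ≤ 2 * γ * μ i := by nlinarith
      have h3 : P i ≤ P j := pow_le_pow_left₀ (hsub i).le (by linarith) _
      exact mul_le_mul h3 h2 (inv_pos.mpr (hμpos i)).le (hPpos j).le
    have hAnti : Antivary d ν := by
      intro i j hij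
      exact hdmono (le_of_not_gt fun h => ((hνanti h.le).not_gt hij))
    -- matrix computations
    have hSinv : Sig⁻¹ = U * Matrix.diagonal (fun i => (μ i)⁻¹) * Uᵀ := by
      apply Matrix.inv_eq_right_inv
      rw [hSigdiag, conj_mul17 U _ _ hUU, Matrix.diagonal_mul_diagonal]
      have h1 : (fun i => μ i * (μ i)⁻¹) = fun _ => (1:ℝ) :=
        funext fun i => mul_inv_cancel₀ (hμne i)
      rw [h1, Matrix.diagonal_one, Matrix.mul_one, hU]
    have hsplit : Matrix.diagonal (fun i : Fin M => 1 - 2 * γ * μ i)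
        = (1 : Matrix (Fin M) (Fin M) ℝ) - (2 * γ) • Matrix.diagonal μ := by
      rw [← Matrix.diagonal_one, ← Matrix.diagonal_smul, ← Matrix.diagonal_sub]
      congr 1
    have hone : (1 : Matrix (Fin M) (Fin M) ℝ) - (2 * γ) • Sig
        = U * Matrix.diagonal (fun i => 1 - 2 * γ * μ i) * Uᵀ := by
      rw [hSigdiag, hsplit, Matrix.mul_sub, Matrix.sub_mul, Matrix.mul_one, hU,
        Matrix.mul_smul, Matrix.smul_mul]
    have hpow : ((1 : Matrix (Fin M) (Fin M) ℝ) - (2 * γ) • Sig) ^ (2 * Teff)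
        = U * Matrix.diagonal P * Uᵀ := by
      rw [hone, conj_pow17 U _ hU hUU, Matrix.diagonal_pow]
      rfl
    -- reduce the trace to a double sum
    have hWWt : (Uᵀ * V) * (Uᵀ * V)ᵀ = 1 := by
      rw [Matrix.transpose_mul, Matrix.transpose_transpose,
        Matrix.mul_assoc, ← Matrix.mul_assoc V, hV, Matrix.one_mul, hUU]
    have hWtW : (Uᵀ * V)ᵀ * (Uᵀ * V) = 1 := mul_eq_one_comm.mp hWWt
    have htr : Matrix.trace
        ((Sig * (((1 : Matrix (Fin M) (Fin M) ℝ) - (2 * γ) • Sig) ^ (2 * Teff)))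
          * Sig⁻¹ * Sigw * Sig⁻¹)
        = ∑ i, ∑ j, (μ i * P i * (μ i)⁻¹) * (μ i)⁻¹ * ((Uᵀ * V) i j) ^ 2 * ν j := by
      rw [hpow, hSinv, hSigdiag, hSigwdiag]
      have h1 : U * Matrix.diagonal μ * Uᵀ * (U * Matrix.diagonal P * Uᵀ)
            * (U * Matrix.diagonal (fun i => (μ i)⁻¹) * Uᵀ)
            * (V * Matrix.diagonal ν * Vᵀ)
            * (U * Matrix.diagonal (fun i => (μ i)⁻¹) * Uᵀ)
          = U * (Matrix.diagonal (fun i => μ i * P i * (μ i)⁻¹)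
              * ((Uᵀ * V) * (Matrix.diagonal ν
                * ((Vᵀ * U) * Matrix.diagonal (fun i => (μ i)⁻¹))))) * Uᵀ := by
        rw [conj_mul17 U _ _ hUU, conj_mul17 U _ _ hUU, Matrix.diagonal_mul_diagonal,
          Matrix.diagonal_mul_diagonal]
        simp only [Matrix.mul_assoc]
      rw [h1, Matrix.trace_mul_cycle, hUU, Matrix.one_mul]
      have h2 := trace_form17 (fun i => μ i * P i * (μ i)⁻¹) ν (fun i => (μ i)⁻¹) (Uᵀ * V)
      simp only [Matrix.transpose_mul, Matrix.transpose_transpose] at h2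
      exact h2
    -- doubly stochastic matrix from squared entries
    set S : Matrix (Fin M) (Fin M) ℝ := Matrix.of (fun i j => ((Uᵀ * V) i j) ^ 2) with hSdef
    have hrow : ∀ i, ∑ j, S i j = 1 := by
      intro i
      have h := congrFun (congrFun hWWt i) i
      rw [Matrix.mul_apply, Matrix.one_apply_eq] at h
      calc ∑ j, S i j = ∑ j, (Uᵀ * V) i j * (Uᵀ * V)ᵀ j i := by
            refine Finset.sum_congr rfl fun j _ => ?_
            rw [Matrix.transpose_apply]
            simp only [hSdef, Matrix.of_apply]
            ring
        _ = 1 := h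
    have hcol : ∀ j, ∑ i, S i j = 1 := by
      intro j
      have h := congrFun (congrFun hWtW j) j
      rw [Matrix.mul_apply, Matrix.one_apply_eq] at h
      calc ∑ i, S i j = ∑ i, (Uᵀ * V)ᵀ j i * (Uᵀ * V) i j := by
            refine Finset.sum_congr rfl fun i _ => ?_
            rw [Matrix.transpose_apply]
            simp only [hSdef, Matrix.of_apply]
            ring
        _ = 1 := h
    have hSmem : S ∈ doublyStochastic ℝ (Fin M) := by
      rw [mem_doublyStochastic_iff_sum]
      exact ⟨fun i j => by simp [hSdef]; positivity, hrow, hcol⟩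
    obtain ⟨w, hw0, hw1, hwS⟩ := exists_eq_sum_perm_of_mem_doublyStochastic hSmem
    have hSentry : ∀ i j, ((Uᵀ * V) i j) ^ 2
        = ∑ σ : Equiv.Perm (Fin M), w σ * (σ.permMatrix ℝ) i j := by
      intro i j
      have h := congrFun (congrFun hwS i) j
      rw [Matrix.sum_apply] at h
      simp only [Matrix.smul_apply, smul_eq_mul] at h
      have h2 : S i j = ((Uᵀ * V) i j) ^ 2 := by simp only [hSdef, Matrix.of_apply]
      rw [h2] at h
      exact h.symm
    have hperm : ∀ (σ : Equiv.Perm (Fin M)) i,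
        ∑ j, (σ.permMatrix ℝ) i j * ν j = ν (σ i) := by
      intro σ i
      simp [Equiv.Perm.permMatrix, PEquiv.toMatrix_apply, Equiv.toPEquiv_apply,
        ite_mul, Finset.sum_ite_eq']
    -- main chain
    rw [ge_iff_le, htr]
    have hgoalrw : ∀ i : Fin M, ν i / (μ i * ((1 - 2 * γ * μ i) ^ (2 * Teff))⁻¹) = d i * ν i := by
      intro i
      simp only [hddef, hPdef]
      rw [div_eq_mul_inv, mul_inv, inv_inv]
      ring
    calc ∑ i ∈ Finset.univ.filter (fun i => μ i < 1 / (γ * Teff)),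
          ν i / (μ i * ((1 - 2 * γ * μ i) ^ (2 * Teff))⁻¹)
        = ∑ i ∈ Finset.univ.filter (fun i => μ i < 1 / (γ * Teff)), d i * ν i :=
          Finset.sum_congr rfl fun i _ => hgoalrw i
      _ ≤ ∑ i, d i * ν i := by
          apply Finset.sum_le_sum_of_subset_of_nonneg (Finset.filter_subset _ _)
          exact fun i _ _ => mul_nonneg (hdpos i).le (hνnonneg i)
      _ = ∑ σ : Equiv.Perm (Fin M), w σ * ∑ i, d i * ν i := by
          rw [← Finset.sum_mul, hw1, one_mul]
      _ ≤ ∑ σ : Equiv.Perm (Fin M), w σ * ∑ i, d i * ν (σ i) := by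
          refine Finset.sum_le_sum fun σ _ => ?_
          exact mul_le_mul_of_nonneg_left (hAnti.sum_mul_le_sum_mul_comp_perm (σ := σ)) (hw0 σ)
      _ = ∑ σ : Equiv.Perm (Fin M), ∑ i, ∑ j, w σ * (d i * ((σ.permMatrix ℝ) i j * ν j)) := by
          refine Finset.sum_congr rfl fun σ _ => ?_
          rw [Finset.mul_sum]
          refine Finset.sum_congr rfl fun i _ => ?_
          rw [← hperm σ i, Finset.mul_sum, Finset.mul_sum]
      _ = ∑ i, ∑ j, ∑ σ : Equiv.Perm (Fin M), w σ * (d i * ((σ.permMatrix ℝ) i j * ν j)) := by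
          rw [Finset.sum_comm]
          exact Finset.sum_congr rfl fun i _ => Finset.sum_comm
      _ = ∑ i, ∑ j, (μ i * P i * (μ i)⁻¹) * (μ i)⁻¹ * ((Uᵀ * V) i j) ^ 2 * ν j := by
          refine Finset.sum_congr rfl fun i _ => Finset.sum_congr rfl fun j _ => ?_
          rw [hSentry i j, Finset.mul_sum]
          have hde : (μ i * P i * (μ i)⁻¹) * (μ i)⁻¹ = d i := by
            simp only [hddef]
            field_simp
          rw [hde, Finset.sum_mul]
          refine Finset.sum_congr rfl fun σ _ => ?_
          ring
  · -- Part 2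
    intro i hi hle
    set x := 2 * γ * μ i with hx
    have hx0 : 0 < x := by
      have := hμpos i; positivity
    have h1x : (0:ℝ) < 1 - x := by linarith
    have hkey : (1 - x)⁻¹ ≤ Real.exp (2 * x) := by
      rw [inv_le_iff_one_le_mul₀ h1x]
      have h1 : 2 * x + 1 ≤ Real.exp (2 * x) := by
        have := Real.add_one_le_exp (2 * x); linarith
      nlinarith [Real.exp_pos (2 * x)]
    have hxT : x * Teff < 2 := by
      have hγT : 0 < γ * Teff := by positivity
      have h2 := (lt_div_iff₀ hγT).mp hi
      calc x * Teff = 2 * (μ i * (γ * Teff)) := by ring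
        _ < 2 * 1 := by linarith
        _ = 2 := by ring
    calc ((1 - x) ^ (2 * Teff))⁻¹ = ((1 - x)⁻¹) ^ (2 * Teff) := by
          rw [inv_pow]
      _ ≤ (Real.exp (2 * x)) ^ (2 * Teff) := by
          apply pow_le_pow_left₀ (by positivity) hkey
      _ = Real.exp ((2 * Teff : ℕ) * (2 * x)) := by
          rw [← Real.exp_nat_mul]
      _ ≤ Real.exp 8 := by
          apply Real.exp_le_exp.mpr
          push_cast
          nlinarith
end
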